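/- arXiv:2512.09678 — 2 statements merged into one kernel-verified Lean document; each statement's English description precedes it below -/
import Mathlib

section
/- Let ‖·‖₍₁₎ and ‖·‖₍₂₎ be two norms on a finite-dimensional real inner product space, and let α₁, α₂ > 0. Define ‖x‖ = α₁‖x‖₍₁₎ + α₂‖x‖₍₂₎. Then the unit ball of the dual norm of ‖·‖ equals the Minkowski sum α₁·B₁* + α₂·B₂*, where Bᵢ* is the unit ball of the dual norm of ‖·‖₍ᵢ₎. -/
open scoped Pointwise

def IsNorm {V : Type*} [AddCommGroup V] [Module ℝ V] (n : V → ℝ) : Prop :=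
  (∀ x y, n (x + y) ≤ n x + n y) ∧ (∀ (a : ℝ) (x : V), n (a • x) = |a| * n x) ∧
    ∀ x, n x = 0 → x = 0

noncomputable def dualNorm {V : Type*} [NormedAddCommGroup V] [InnerProductSpace ℝ V]
    (n : V → ℝ) (y : V) : ℝ :=
  sSup {r : ℝ | ∃ x, n x ≤ 1 ∧ r = (inner ℝ y x : ℝ)}

section Aux

variable {V : Type*} [NormedAddCommGroup V] [InnerProductSpace ℝ V]

lemma IsNorm.zero {n : V → ℝ} (h : IsNorm n) : n 0 = 0 := by
  have := h.2.1 0 0; simpa using this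

lemma IsNorm.nonneg {n : V → ℝ} (h : IsNorm n) (x : V) : 0 ≤ n x := by
  have h1 := h.1 x (-x)
  have h2 : n (-x) = n x := by
    have := h.2.1 (-1) x; simpa using this
  have h0 : n 0 = 0 := h.zero
  simp only [add_neg_cancel, h0, h2] at h1
  linarith

lemma IsNorm.sum_le {n : V → ℝ} (h : IsNorm n) {ι : Type*} (s : Finset ι) (f : ι → V) :
    n (∑ i ∈ s, f i) ≤ ∑ i ∈ s, n (f i) := by
  classical
  induction s using Finset.induction_on with
  | empty => simp [h.zero]
  | @insert a s hx ih =>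
    rw [Finset.sum_insert hx, Finset.sum_insert hx]
    exact (h.1 _ _).trans (by linarith)

variable [FiniteDimensional ℝ V]

lemma IsNorm.upper {n : V → ℝ} (h : IsNorm n) : ∃ C : ℝ, ∀ x, n x ≤ C * ‖x‖ := by
  classical
  set b := Module.finBasis ℝ V
  set C : ℝ := ∑ i, n (b i) * ‖(LinearMap.toContinuousLinearMap (b.coord i) : V →L[ℝ] ℝ)‖
  refine ⟨C, fun x => ?_⟩
  have hx : x = ∑ i, b.repr x i • b i := (b.sum_repr x).symm
  calc n x = n (∑ i, b.repr x i • b i) := by rw [← hx]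
    _ ≤ ∑ i, n (b.repr x i • b i) := h.sum_le _ _
    _ ≤ ∑ i, n (b i) * ‖(LinearMap.toContinuousLinearMap (b.coord i) : V →L[ℝ] ℝ)‖ * ‖x‖ := by
        refine Finset.sum_le_sum fun i _ => ?_
        rw [h.2.1]
        have hb : |b.repr x i| ≤ ‖(LinearMap.toContinuousLinearMap (b.coord i) : V →L[ℝ] ℝ)‖ * ‖x‖ := by
          have := (LinearMap.toContinuousLinearMap (b.coord i)).le_opNorm x
          simpa [Real.norm_eq_abs, Module.Basis.coord_apply] using this
        have := mul_le_mul_of_nonneg_left hb (h.nonneg (b i))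
        nlinarith [h.nonneg (b i), abs_nonneg (b.repr x i)]
    _ = C * ‖x‖ := by rw [← Finset.sum_mul]

lemma IsNorm.continuous {n : V → ℝ} (h : IsNorm n) : Continuous n := by
  obtain ⟨C, hC⟩ := h.upper
  have hlip : ∀ x y : V, |n x - n y| ≤ C * ‖x - y‖ := by
    intro x y
    have h1 : n x ≤ n y + n (x - y) := by
      have := h.1 y (x - y); simpa using this
    have h2 : n y ≤ n x + n (x - y) := by
      have hn : n (y - x) = n (x - y) := by
        have := h.2.1 (-1) (x - y)
        simpa [neg_sub] using this
      have h3 : n y ≤ n x + n (y - x) := by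
        have := h.1 x (y - x)
        simpa using this
      rw [hn] at h3; exact h3
    have := hC (x - y)
    rw [abs_le]; constructor <;> linarith
  rw [Metric.continuous_iff]
  intro x ε hε
  rcases le_or_gt C 0 with hC0 | hC0
  · refine ⟨1, one_pos, fun y hy => ?_⟩
    have := hlip y x
    have : |n y - n x| ≤ 0 := this.trans (by nlinarith [norm_nonneg (y - x)])
    simp [Real.dist_eq]
    linarith [abs_nonneg (n y - n x)]
  · refine ⟨ε / C, by positivity, fun y hy => ?_⟩
    have := hlip y x
    rw [Real.dist_eq]
    have hd : ‖y - x‖ < ε / C := by rwa [dist_eq_norm] at hy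
    calc |n y - n x| ≤ C * ‖y - x‖ := this
      _ < C * (ε / C) := by exact mul_lt_mul_of_pos_left hd hC0
      _ = ε := by field_simp

lemma IsNorm.lower {n : V → ℝ} (h : IsNorm n) : ∃ c : ℝ, 0 < c ∧ ∀ x, ‖x‖ ≤ c * n x := by
  rcases subsingleton_or_nontrivial V with hV | hV
  · exact ⟨1, one_pos, fun x => by
      rw [Subsingleton.elim x 0]; simpa using h.nonneg 0⟩
  · have hsc : IsCompact (Metric.sphere (0 : V) 1) := isCompact_sphere _ _
    have hsn : (Metric.sphere (0 : V) 1).Nonempty := NormedSpace.sphere_nonempty.mpr zero_le_one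
    obtain ⟨z, hz, hzmin⟩ := hsc.exists_isMinOn hsn h.continuous.continuousOn
    have hz1 : ‖z‖ = 1 := by simpa using hz
    have hz0 : z ≠ 0 := by intro hzz; rw [hzz] at hz1; simp at hz1
    have hm : 0 < n z := lt_of_le_of_ne (h.nonneg z) fun hc => hz0 (h.2.2 z hc.symm)
    refine ⟨(n z)⁻¹, by positivity, fun x => ?_⟩
    rcases eq_or_ne x 0 with rfl | hx
    · simp [h.zero]
    · have hxn : (0:ℝ) < ‖x‖ := norm_pos_iff.mpr hx
      have hu : (‖x‖⁻¹ • x) ∈ Metric.sphere (0 : V) 1 := by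
        simp [norm_smul, abs_of_pos (inv_pos.mpr hxn), inv_mul_cancel₀ hxn.ne']
      have hmin : n z ≤ n (‖x‖⁻¹ • x) := hzmin hu
      have hnx : n (‖x‖⁻¹ • x) = ‖x‖⁻¹ * n x := by
        rw [h.2.1, abs_of_pos (inv_pos.mpr hxn)]
      rw [hnx] at hmin
      have hkey : ‖x‖ * n z ≤ n x := by
        have := mul_le_mul_of_nonneg_left hmin hxn.le
        rwa [mul_inv_cancel_left₀ hxn.ne'] at this
      rw [inv_mul_eq_div, le_div_iff₀ hm]
      exact hkey

lemma IsNorm.dualNorm_le_one_iff {n : V → ℝ} (h : IsNorm n) (y : V) :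
    dualNorm n y ≤ 1 ↔ ∀ x, (inner ℝ y x : ℝ) ≤ n x := by
  obtain ⟨c, hc, hcb⟩ := h.lower
  have hbdd : BddAbove {r : ℝ | ∃ x, n x ≤ 1 ∧ r = (inner ℝ y x : ℝ)} := by
    refine ⟨‖y‖ * c, ?_⟩
    rintro r ⟨x, hx, rfl⟩
    calc (inner ℝ y x : ℝ) ≤ ‖y‖ * ‖x‖ := real_inner_le_norm y x
      _ ≤ ‖y‖ * (c * n x) := by
          exact mul_le_mul_of_nonneg_left (hcb x) (norm_nonneg y)
      _ ≤ ‖y‖ * c := by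
          have : c * n x ≤ c * 1 := mul_le_mul_of_nonneg_left hx hc.le
          rw [mul_one] at this
          exact mul_le_mul_of_nonneg_left this (norm_nonneg y)
  constructor
  · intro hd x
    rcases eq_or_lt_of_le (h.nonneg x) with hx0 | hx0
    · have : x = 0 := h.2.2 x hx0.symm
      simp [this, h.zero]
    · have hu : n ((n x)⁻¹ • x) ≤ 1 := by
        rw [h.2.1, abs_of_pos (inv_pos.mpr hx0), inv_mul_cancel₀ hx0.ne']
      have hmem : (inner ℝ y ((n x)⁻¹ • x) : ℝ) ∈
          {r : ℝ | ∃ x, n x ≤ 1 ∧ r = (inner ℝ y x : ℝ)} := ⟨_, hu, rfl⟩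
      have := (le_csSup hbdd hmem).trans hd
      rw [real_inner_smul_right] at this
      calc (inner ℝ y x : ℝ) = n x * ((n x)⁻¹ * (inner ℝ y x : ℝ)) := by field_simp
        _ ≤ n x * 1 := mul_le_mul_of_nonneg_left this hx0.le
        _ = n x := mul_one _
  · intro hy
    apply Real.sSup_le _ zero_le_one
    rintro r ⟨x, hx, rfl⟩
    exact (hy x).trans hx

/-- Hahn–Banach sandwich decomposition via infimal convolution. -/
lemma decompose {p q : V → ℝ} (hpadd : ∀ x y, p (x + y) ≤ p x + p y)
    (hphom : ∀ (a : ℝ) (x : V), p (a • x) = |a| * p x)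
    (hqadd : ∀ x y, q (x + y) ≤ q x + q y)
    (hqhom : ∀ (a : ℝ) (x : V), q (a • x) = |a| * q x)
    (y : V) (hy : ∀ x, (inner ℝ y x : ℝ) ≤ p x + q x) :
    ∃ y₁ : V, (∀ x, (inner ℝ y₁ x : ℝ) ≤ p x) ∧ (∀ x, (inner ℝ (y - y₁) x : ℝ) ≤ q x) := by
  set f : V → ℝ := fun x => (inner ℝ y x : ℝ) with hf
  have hp0 : p 0 = 0 := by have := hphom 0 0; simpa using this
  have hq0 : q 0 = 0 := by have := hqhom 0 0; simpa using this
  have hf0 : f 0 = 0 := by simp [hf]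
  have hfadd : ∀ a b : V, f (a + b) = f a + f b := fun a b => inner_add_right y a b
  have hfsmul : ∀ (c : ℝ) (a : V), f (c • a) = c * f a := fun c a => real_inner_smul_right y a c
  have hfneg : ∀ a : V, f (-a) = - f a := by
    intro a; have := hfsmul (-1) a; simpa using this
  set R : V → Set ℝ := fun x => Set.range (fun v => p (x + v) + q v - f v) with hR
  have hlb : ∀ x v, f x - q x ≤ p (x + v) + q v - f v := by
    intro x v
    have h1 : f (x + v) ≤ p (x + v) + q (x + v) := hy (x + v)
    have h2 : q (x + v) ≤ q x + q v := hqadd x v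
    have h3 : f (x + v) = f x + f v := hfadd x v
    linarith
  have hbdd : ∀ x, BddBelow (R x) := by
    intro x; exact ⟨f x - q x, by rintro r ⟨v, rfl⟩; exact hlb x v⟩
  have hne : ∀ x, (R x).Nonempty := fun x => Set.range_nonempty _
  set s : V → ℝ := fun x => sInf (R x) with hs
  have s_le : ∀ x v, s x ≤ p (x + v) + q v - f v := fun x v => csInf_le (hbdd x) ⟨v, rfl⟩
  have s_lb : ∀ x, f x - q x ≤ s x := fun x =>
    le_csInf (hne x) (by rintro r ⟨v, rfl⟩; exact hlb x v)
  have s_le_p : ∀ x, s x ≤ p x := by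
    intro x
    have := s_le x 0
    simpa [hq0, hf0] using this
  have hsub : ∀ a b, s (a + b) ≤ s a + s b := by
    intro a b
    have key : ∀ r ∈ R a, ∀ t ∈ R b, s (a + b) ≤ r + t := by
      rintro r ⟨v, rfl⟩ t ⟨w, rfl⟩
      dsimp only
      have h1 : s (a + b) ≤ p (a + b + (v + w)) + q (v + w) - f (v + w) := s_le _ _
      have h2 : p (a + b + (v + w)) ≤ p (a + v) + p (b + w) := by
        have := hpadd (a + v) (b + w)
        have he : a + b + (v + w) = a + v + (b + w) := by abel
        rw [he]; exact this
      have h3 : q (v + w) ≤ q v + q w := hqadd v w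
      have h4 : f (v + w) = f v + f w := hfadd v w
      linarith
    have h1 : ∀ r ∈ R a, s (a + b) - r ≤ s b :=
      fun r hr => le_csInf (hne b) fun t ht => by linarith [key r hr t ht]
    have h2 : s (a + b) - s b ≤ s a :=
      le_csInf (hne a) fun r hr => by linarith [h1 r hr]
    linarith
  have hshom_le : ∀ c : ℝ, 0 < c → ∀ x, s (c • x) ≤ c * s x := by
    intro c hc x
    have key : ∀ r ∈ R x, s (c • x) ≤ c * r := by
      rintro r ⟨w, rfl⟩
      dsimp only
      have h1 : s (c • x) ≤ p (c • x + c • w) + q (c • w) - f (c • w) := s_le _ _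
      have h2 : p (c • x + c • w) = c * p (x + w) := by
        rw [← smul_add, hphom, abs_of_pos hc]
      have h3 : q (c • w) = c * q w := by rw [hqhom, abs_of_pos hc]
      have h4 : f (c • w) = c * f w := hfsmul c w
      rw [h2, h3, h4] at h1
      calc s (c • x) ≤ c * p (x + w) + c * q w - c * f w := h1
        _ = c * (p (x + w) + q w - f w) := by ring
    have : s (c • x) / c ≤ s x := le_csInf (hne x) fun r hr => by
      rw [div_le_iff₀ hc, mul_comm]; exact key r hr
    calc s (c • x) = c * (s (c • x) / c) := by field_simp
      _ ≤ c * s x := mul_le_mul_of_nonneg_left this hc.le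
  have hshom : ∀ c : ℝ, 0 < c → ∀ x, s (c • x) = c * s x := by
    intro c hc x
    refine le_antisymm (hshom_le c hc x) ?_
    have h1 : s x ≤ c⁻¹ * s (c • x) := by
      have := hshom_le c⁻¹ (inv_pos.mpr hc) (c • x)
      rwa [smul_smul, inv_mul_cancel₀ hc.ne', one_smul] at this
    calc c * s x ≤ c * (c⁻¹ * s (c • x)) := mul_le_mul_of_nonneg_left h1 hc.le
      _ = s (c • x) := by field_simp
  -- Hahn–Banach
  obtain ⟨g, -, hg⟩ := exists_extension_of_le_sublinear ((0 : V →ₗ[ℝ] ℝ).toPMap ⊥) s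
    (fun c hc x => hshom c hc x) hsub
    (by
      intro x
      have hx0 : (x : V) = 0 := (Submodule.mem_bot ℝ).mp x.2
      change (0 : V →ₗ[ℝ] ℝ) (x : V) ≤ s (x : V); rw [hx0]
      simp only [LinearMap.zero_apply]
      have := s_lb 0
      simp only [hf0, hq0, sub_zero] at this
      exact this)
  have hgs : ∀ x, g x ≤ s x := hg
  set y₁ : V := (InnerProductSpace.toDual ℝ V).symm (LinearMap.toContinuousLinearMap g) with hy₁
  have hy₁x : ∀ x, (inner ℝ y₁ x : ℝ) = g x := by
    intro x
    rw [hy₁, InnerProductSpace.toDual_symm_apply]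
    rfl
  refine ⟨y₁, fun x => ?_, fun x => ?_⟩
  · rw [hy₁x]
    exact (hgs x).trans (s_le_p x)
  · rw [inner_sub_left, hy₁x]
    have h1 : g (-x) ≤ s (-x) := hgs (-x)
    have h2 : s (-x) ≤ p (-x + x) + q x - f x := s_le (-x) x
    have h3 : p (-x + x) = 0 := by rw [neg_add_cancel]; exact hp0
    have h4 : g (-x) = - g x := map_neg g x
    have : (inner ℝ y x : ℝ) = f x := rfl
    rw [this]
    linarith

end Aux

/-- The dual unit ball of α₁‖·‖₍₁₎ + α₂‖·‖₍₂₎ is the Minkowski sum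
α₁·B₁* + α₂·B₂* of the scaled dual unit balls. -/
theorem stmt2 {V : Type*} [NormedAddCommGroup V] [InnerProductSpace ℝ V]
    [FiniteDimensional ℝ V] (n₁ n₂ : V → ℝ) (h₁ : IsNorm n₁) (h₂ : IsNorm n₂)
    (α₁ α₂ : ℝ) (hα₁ : 0 < α₁) (hα₂ : 0 < α₂) :
    {y : V | dualNorm (fun x => α₁ * n₁ x + α₂ * n₂ x) y ≤ 1}
      = α₁ • {y : V | dualNorm n₁ y ≤ 1} + α₂ • {y : V | dualNorm n₂ y ≤ 1} := by
  have hN : IsNorm (fun x => α₁ * n₁ x + α₂ * n₂ x) := by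
    refine ⟨fun x y => ?_, fun a x => ?_, fun x hx => ?_⟩
    · have := h₁.1 x y; have := h₂.1 x y; simp only; nlinarith
    · simp only [h₁.2.1, h₂.2.1]; ring
    · simp only at hx
      have e1 := mul_nonneg hα₁.le (h₁.nonneg x)
      have e2 := mul_nonneg hα₂.le (h₂.nonneg x)
      have : n₁ x = 0 := by nlinarith [h₁.nonneg x]
      exact h₁.2.2 x this
  ext y
  simp only [Set.mem_setOf_eq, Set.mem_add, Set.mem_smul_set]
  rw [hN.dualNorm_le_one_iff]
  constructor
  · intro hy
    obtain ⟨y₁, hy₁, hy₂⟩ := decompose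
      (p := fun x => α₁ * n₁ x) (q := fun x => α₂ * n₂ x)
      (fun x y => by have := h₁.1 x y; nlinarith)
      (fun a x => by simp only [h₁.2.1]; ring)
      (fun x y => by have := h₂.1 x y; nlinarith)
      (fun a x => by simp only [h₂.2.1]; ring)
      y hy
    refine ⟨α₁ • (α₁⁻¹ • y₁), ⟨α₁⁻¹ • y₁, ?_, rfl⟩,
      α₂ • (α₂⁻¹ • (y - y₁)), ⟨α₂⁻¹ • (y - y₁), ?_, rfl⟩, ?_⟩
    · rw [h₁.dualNorm_le_one_iff]
      intro x
      rw [real_inner_smul_left]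
      have := hy₁ x
      calc α₁⁻¹ * (inner ℝ y₁ x : ℝ) ≤ α₁⁻¹ * (α₁ * n₁ x) :=
        mul_le_mul_of_nonneg_left this (by positivity)
        _ = n₁ x := by field_simp
    · rw [h₂.dualNorm_le_one_iff]
      intro x
      rw [real_inner_smul_left]
      have := hy₂ x
      calc α₂⁻¹ * (inner ℝ (y - y₁) x : ℝ) ≤ α₂⁻¹ * (α₂ * n₂ x) :=
        mul_le_mul_of_nonneg_left this (by positivity)
        _ = n₂ x := by field_simp
    · rw [smul_inv_smul₀ hα₁.ne', smul_inv_smul₀ hα₂.ne']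
      abel
  · rintro ⟨a, ⟨z₁, hz₁, rfl⟩, b, ⟨z₂, hz₂, rfl⟩, rfl⟩
    rw [h₁.dualNorm_le_one_iff] at hz₁
    rw [h₂.dualNorm_le_one_iff] at hz₂
    intro x
    rw [inner_add_left, real_inner_smul_left, real_inner_smul_left]
    have e1 := mul_le_mul_of_nonneg_left (hz₁ x) hα₁.le
    have e2 := mul_le_mul_of_nonneg_left (hz₂ x) hα₂.le
    linarith
end

section
/- For any real m×n matrix M and any integer 1 ≤ k ≤ min(m,n), the norm dual to the Ky Fan k-norm satisfies ‖M‖_{KF-k}† = max{(1/k)‖M‖_nuc, ‖M‖_op}, where ‖M‖_nuc is the nuclear norm and ‖M‖_op is the operator (spectral) norm. -/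
open Matrix


noncomputable def singularValues {m n : ℕ} (A : Matrix (Fin m) (Fin n) ℝ) : Fin n → ℝ :=
  fun i => Real.sqrt ((Matrix.isHermitian_conjTranspose_mul_self A).eigenvalues i)

def finner {m n : ℕ} (A B : Matrix (Fin m) (Fin n) ℝ) : ℝ := ∑ i, ∑ j, A i j * B i j

noncomputable def nuclearNorm {m n : ℕ} (A : Matrix (Fin m) (Fin n) ℝ) : ℝ :=
  ∑ i, singularValues A i

noncomputable def opNorm {m n : ℕ} (A : Matrix (Fin m) (Fin n) ℝ) : ℝ :=
  sSup (Set.range (singularValues A))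

noncomputable def kyFan {m n : ℕ} (k : ℕ) (A : Matrix (Fin m) (Fin n) ℝ) : ℝ :=
  sSup {s : ℝ | ∃ T : Finset (Fin n), T.card = k ∧ s = ∑ i ∈ T, singularValues A i}

noncomputable def dualMatNorm {m n : ℕ} (N : Matrix (Fin m) (Fin n) ℝ → ℝ)
    (M : Matrix (Fin m) (Fin n) ℝ) : ℝ :=
  sSup {r : ℝ | ∃ D, N D ≤ 1 ∧ r = finner M D}

noncomputable def schatten {m n : ℕ} (p : ℝ) (A : Matrix (Fin m) (Fin n) ℝ) : ℝ :=
  (∑ i, singularValues A i ^ p) ^ (1 / p)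

namespace KFdual
variable {m n N : ℕ}

/-- right singular vectors -/
noncomputable def Vv (A : Matrix (Fin m) (Fin n) ℝ) : Fin n → Fin n → ℝ :=
  fun i a => ((Matrix.isHermitian_conjTranspose_mul_self A).eigenvectorUnitary : Matrix (Fin n) (Fin n) ℝ) a i

/-- left singular vectors -/
noncomputable def Uv (A : Matrix (Fin m) (Fin n) ℝ) : Fin n → Fin m → ℝ :=
  fun i => (singularValues A i)⁻¹ • (A *ᵥ Vv A i)

lemma sv_nonneg (A : Matrix (Fin m) (Fin n) ℝ) (i : Fin n) : 0 ≤ singularValues A i :=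
  Real.sqrt_nonneg _

lemma sv_sq (A : Matrix (Fin m) (Fin n) ℝ) (i : Fin n) :
    singularValues A i ^ 2 = (Matrix.isHermitian_conjTranspose_mul_self A).eigenvalues i :=
  Real.sq_sqrt (Matrix.eigenvalues_conjTranspose_mul_self_nonneg A i)

lemma V_dot (A : Matrix (Fin m) (Fin n) ℝ) (i j : Fin n) :
    Vv A i ⬝ᵥ Vv A j = if i = j then 1 else 0 := by
  have h := Unitary.coe_star_mul_self (Matrix.isHermitian_conjTranspose_mul_self A).eigenvectorUnitary
  have := congrFun (congrFun h i) j
  simpa [Matrix.mul_apply, Matrix.one_apply, Vv, dotProduct, Matrix.conjTranspose_apply]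
    using this

lemma V_complete (A : Matrix (Fin m) (Fin n) ℝ) (a b : Fin n) :
    ∑ i, Vv A i a * Vv A i b = if a = b then 1 else 0 := by
  have h := Unitary.coe_mul_star_self (Matrix.isHermitian_conjTranspose_mul_self A).eigenvectorUnitary
  have := congrFun (congrFun h a) b
  simpa [Matrix.mul_apply, Matrix.one_apply, Vv, Matrix.conjTranspose_apply] using this

lemma ATA_mulVec (A : Matrix (Fin m) (Fin n) ℝ) (i : Fin n) :
    (Aᴴ * A) *ᵥ Vv A i = (singularValues A i ^ 2) • Vv A i := by
  have h := (Matrix.isHermitian_conjTranspose_mul_self A).mulVec_eigenvectorBasis i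
  have hV : Vv A i = ⇑((Matrix.isHermitian_conjTranspose_mul_self A).eigenvectorBasis i) := by
    funext a
    simp [Vv, Matrix.IsHermitian.eigenvectorUnitary_apply]
  rw [hV, sv_sq, h]

lemma conjT_eq (A : Matrix (Fin m) (Fin n) ℝ) : Aᴴ = Aᵀ := by
  ext a b; simp [Matrix.conjTranspose_apply]

lemma AV_dot_AV (A : Matrix (Fin m) (Fin n) ℝ) (i j : Fin n) :
    (A *ᵥ Vv A i) ⬝ᵥ (A *ᵥ Vv A j) =
      (singularValues A j ^ 2) * (if i = j then 1 else 0) := by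
  calc (A *ᵥ Vv A i) ⬝ᵥ (A *ᵥ Vv A j)
      = (A *ᵥ Vv A j) ⬝ᵥ (A *ᵥ Vv A i) := dotProduct_comm _ _
    _ = ((A *ᵥ Vv A j) ᵥ* A) ⬝ᵥ Vv A i := Matrix.dotProduct_mulVec _ _ _
    _ = ((Aᴴ * A) *ᵥ Vv A j) ⬝ᵥ Vv A i := by
        rw [conjT_eq, ← Matrix.mulVec_mulVec, Matrix.mulVec_transpose]
    _ = (singularValues A j ^ 2) * (if i = j then 1 else 0) := by
        rw [ATA_mulVec, smul_dotProduct, V_dot, smul_eq_mul]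
        congr 1
        simp [eq_comm]

lemma AV_eq_zero (A : Matrix (Fin m) (Fin n) ℝ) (i : Fin n)
    (h : singularValues A i = 0) : A *ᵥ Vv A i = 0 := by
  have h2 := AV_dot_AV A i i
  rw [h, if_pos rfl] at h2
  have h3 : ∑ a, (A *ᵥ Vv A i) a * (A *ᵥ Vv A i) a = 0 := by
    simpa [dotProduct] using h2
  funext a
  have := (Finset.sum_eq_zero_iff_of_nonneg (fun a _ => mul_self_nonneg _)).mp h3 a (Finset.mem_univ a)
  simpa [mul_self_eq_zero] using this

lemma A_mulVec_V (A : Matrix (Fin m) (Fin n) ℝ) (i : Fin n) :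
    A *ᵥ Vv A i = singularValues A i • Uv A i := by
  rcases eq_or_ne (singularValues A i) 0 with h | h
  · rw [h, zero_smul, AV_eq_zero A i h]
  · rw [Uv, smul_smul, mul_inv_cancel₀ h, one_smul]

lemma U_dot (A : Matrix (Fin m) (Fin n) ℝ) (i j : Fin n)
    (hi : singularValues A i ≠ 0) (hj : singularValues A j ≠ 0) :
    Uv A i ⬝ᵥ Uv A j = if i = j then 1 else 0 := by
  rw [Uv, Uv, smul_dotProduct, dotProduct_smul, AV_dot_AV]
  rcases eq_or_ne i j with rfl | hij
  · rw [smul_eq_mul, smul_eq_mul, if_pos rfl, mul_one, pow_two]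
    field_simp
  · simp [hij]

lemma mul_vecMulVec (A : Matrix (Fin m) (Fin n) ℝ) (x : Fin n → ℝ) (y : Fin n → ℝ) :
    A * vecMulVec x y = vecMulVec (A *ᵥ x) y := by
  ext a b
  simp [Matrix.mul_apply, vecMulVec_apply, Matrix.mulVec, dotProduct, Finset.sum_mul, mul_assoc]

lemma decomp (A : Matrix (Fin m) (Fin n) ℝ) :
    A = ∑ i, singularValues A i • vecMulVec (Uv A i) (Vv A i) := by
  have h1 : (∑ i, vecMulVec (Vv A i) (Vv A i)) = (1 : Matrix (Fin n) (Fin n) ℝ) := by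
    ext a b
    simpa [Matrix.sum_apply, vecMulVec_apply, Matrix.one_apply] using V_complete A a b
  calc A = A * (1 : Matrix (Fin n) (Fin n) ℝ) := by rw [Matrix.mul_one]
    _ = ∑ i, A * vecMulVec (Vv A i) (Vv A i) := by rw [← h1, Matrix.mul_sum]
    _ = ∑ i, singularValues A i • vecMulVec (Uv A i) (Vv A i) := by
        refine Finset.sum_congr rfl fun i _ => ?_
        rw [mul_vecMulVec, A_mulVec_V]
        ext a b
        simp [vecMulVec_apply, Matrix.smul_apply, mul_assoc]

lemma sum_dotProduct' {ι : Type*} (s : Finset ι) (f : ι → Fin N → ℝ) (x : Fin N → ℝ) :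
    (∑ i ∈ s, f i) ⬝ᵥ x = ∑ i ∈ s, f i ⬝ᵥ x := by
  simp only [dotProduct, Finset.sum_apply, Finset.sum_mul]
  rw [Finset.sum_comm]

lemma dotProduct_sum' {ι : Type*} (s : Finset ι) (f : ι → Fin N → ℝ) (x : Fin N → ℝ) :
    x ⬝ᵥ (∑ i ∈ s, f i) = ∑ i ∈ s, x ⬝ᵥ f i := by
  simp only [dotProduct, Finset.sum_apply, Finset.mul_sum]
  rw [Finset.sum_comm]

lemma bessel {ι : Type*} [DecidableEq ι] (s : Finset ι) (w : ι → Fin N → ℝ)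
    (hw : ∀ i ∈ s, ∀ j ∈ s, w i ⬝ᵥ w j = if i = j then 1 else 0) (x : Fin N → ℝ) :
    ∑ i ∈ s, (w i ⬝ᵥ x) ^ 2 ≤ x ⬝ᵥ x := by
  set c : ι → ℝ := fun i => w i ⬝ᵥ x with hc
  set S : Fin N → ℝ := ∑ i ∈ s, c i • w i with hS
  have h0 : 0 ≤ (x - S) ⬝ᵥ (x - S) := Finset.sum_nonneg fun a _ => mul_self_nonneg _
  have hSx : S ⬝ᵥ x = ∑ i ∈ s, c i ^ 2 := by
    rw [hS, sum_dotProduct' s _ _]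
    refine Finset.sum_congr rfl fun i hi => ?_
    rw [smul_dotProduct, smul_eq_mul, sq]
  have hxS : x ⬝ᵥ S = ∑ i ∈ s, c i ^ 2 := by
    rw [dotProduct_comm, hSx]
  have hSS : S ⬝ᵥ S = ∑ i ∈ s, c i ^ 2 := by
    rw [hS, sum_dotProduct' s _ _]
    refine Finset.sum_congr rfl fun i hi => ?_
    rw [smul_dotProduct, dotProduct_sum' s _ _]
    have h2 : ∀ j ∈ s, w i ⬝ᵥ (c j • w j) = if i = j then c j else 0 := fun j hj => by
      rw [dotProduct_smul, smul_eq_mul, hw i hi j hj, mul_ite, mul_one, mul_zero]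
    rw [Finset.sum_congr rfl h2, Finset.sum_ite_eq s i c, if_pos hi, smul_eq_mul, sq]
  rw [sub_dotProduct, dotProduct_sub, dotProduct_sub] at h0
  linarith

lemma exists_max_subset (σ : Fin n → ℝ) (j : ℕ) (hj : j ≤ n) :
    ∃ T : Finset (Fin n), T.card = j ∧
      (∀ S : Finset (Fin n), S.card = j → ∑ i ∈ S, σ i ≤ ∑ i ∈ T, σ i) ∧
      (∀ t ∈ T, ∀ i, i ∉ T → σ i ≤ σ t) := by
  have hne : (Finset.univ.powersetCard j : Finset (Finset (Fin n))).Nonempty := by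
    rw [Finset.powersetCard_nonempty]
    simpa using hj
  obtain ⟨T, hT, hmax⟩ := Finset.exists_max_image _ (fun T => ∑ i ∈ T, σ i) hne
  rw [Finset.mem_powersetCard_univ] at hT
  refine ⟨T, hT, fun S hS => hmax S (Finset.mem_powersetCard_univ.mpr hS), ?_⟩
  intro t ht i hi
  by_contra hlt
  push_neg at hlt
  set T' : Finset (Fin n) := insert i (T.erase t) with hT'
  have hiT' : i ∉ T.erase t := fun h => hi (Finset.mem_of_mem_erase h)
  have hcard : T'.card = j := by
    have h1T : 1 ≤ T.card := Finset.card_pos.mpr ⟨t, ht⟩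
    rw [hT', Finset.card_insert_of_notMem hiT', Finset.card_erase_of_mem ht]
    omega
  have hsum : ∑ x ∈ T', σ x = σ i + (∑ x ∈ T, σ x - σ t) := by
    rw [hT', Finset.sum_insert hiT']
    congr 1
    have := Finset.sum_erase_add T σ ht
    linarith
  have := hmax T' (Finset.mem_powersetCard_univ.mpr hcard)
  rw [hsum] at this
  linarith

lemma weighted (σ w : Fin n → ℝ) (hσ : ∀ i, 0 ≤ σ i) (hw0 : ∀ i, 0 ≤ w i)
    (hw1 : ∀ i, w i ≤ 1) (j : ℕ) (hj1 : 1 ≤ j) (hjn : j ≤ n) (hsum : ∑ i, w i ≤ j) :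
    ∃ T : Finset (Fin n), T.card = j ∧ ∑ i, w i * σ i ≤ ∑ i ∈ T, σ i := by
  obtain ⟨T, hTcard, _, hswap⟩ := exists_max_subset σ j hjn
  refine ⟨T, hTcard, ?_⟩
  have hTne : T.Nonempty := Finset.card_pos.mp (by omega)
  obtain ⟨t₀, ht₀, hmin⟩ := Finset.exists_min_image T σ hTne
  set μ := σ t₀ with hμ
  have hμ0 : 0 ≤ μ := hσ t₀
  have hout : ∀ i, i ∉ T → σ i ≤ μ := fun i hi => hswap t₀ ht₀ i hi
  -- splits
  have hsplit : ∑ i, w i * σ i = ∑ i ∈ T, w i * σ i + ∑ i ∈ Tᶜ, w i * σ i :=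
    (Finset.sum_add_sum_compl T _).symm
  have hsplitw : ∑ i, w i = ∑ i ∈ T, w i + ∑ i ∈ Tᶜ, w i :=
    (Finset.sum_add_sum_compl T _).symm
  have h1 : ∑ i ∈ Tᶜ, w i * σ i ≤ μ * ∑ i ∈ Tᶜ, w i := by
    rw [Finset.mul_sum]
    refine Finset.sum_le_sum fun i hi => ?_
    have : i ∉ T := by simpa using hi
    calc w i * σ i ≤ w i * μ := by
          exact mul_le_mul_of_nonneg_left (hout i this) (hw0 i)
      _ = μ * w i := mul_comm _ _
  have h2 : ∑ i ∈ T, w i * σ i ≤ ∑ i ∈ T, σ i - μ * ((j : ℝ) - ∑ i ∈ T, w i) := by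
    have key : μ * ((j : ℝ) - ∑ i ∈ T, w i) ≤ ∑ i ∈ T, (1 - w i) * σ i := by
      have e1 : ∑ i ∈ T, (1 - w i) * μ ≤ ∑ i ∈ T, (1 - w i) * σ i :=
        Finset.sum_le_sum fun i hi =>
          mul_le_mul_of_nonneg_left (hmin i hi) (by linarith [hw1 i])
      have e2 : ∑ i ∈ T, (1 - w i) * μ = ((j:ℝ) - ∑ i ∈ T, w i) * μ := by
        rw [← Finset.sum_mul, Finset.sum_sub_distrib, Finset.sum_const, hTcard, nsmul_eq_mul, mul_one]
      rw [mul_comm] at e2 ⊢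
      linarith
    have expand : ∑ i ∈ T, (1 - w i) * σ i = ∑ i ∈ T, σ i - ∑ i ∈ T, w i * σ i := by
      rw [← Finset.sum_sub_distrib]
      exact Finset.sum_congr rfl fun i _ => by ring
    linarith
  have h3 : ∑ i ∈ Tᶜ, w i ≤ (j : ℝ) - ∑ i ∈ T, w i := by linarith
  have h4 : μ * ∑ i ∈ Tᶜ, w i ≤ μ * ((j:ℝ) - ∑ i ∈ T, w i) :=
    mul_le_mul_of_nonneg_left h3 hμ0
  linarith

-- kyFan set facts
lemma kyFan_set_eq (A : Matrix (Fin m) (Fin n) ℝ) (k : ℕ) :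
    {s : ℝ | ∃ T : Finset (Fin n), T.card = k ∧ s = ∑ i ∈ T, singularValues A i} =
      ↑((Finset.univ.powersetCard k).image fun T => ∑ i ∈ T, singularValues A i) := by
  ext s
  simp only [Set.mem_setOf_eq, Finset.coe_image, Set.mem_image, Finset.mem_coe,
    Finset.mem_powersetCard_univ]
  constructor
  · rintro ⟨T, hT, rfl⟩; exact ⟨T, hT, rfl⟩
  · rintro ⟨T, hT, rfl⟩; exact ⟨T, hT, rfl⟩

lemma sum_le_kyFan (A : Matrix (Fin m) (Fin n) ℝ) (k : ℕ) (T : Finset (Fin n))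
    (hT : T.card = k) : ∑ i ∈ T, singularValues A i ≤ kyFan k A := by
  apply le_csSup
  · rw [kyFan_set_eq]; exact Finset.bddAbove _
  · exact ⟨T, hT, rfl⟩

lemma kyFan_le (A : Matrix (Fin m) (Fin n) ℝ) (k : ℕ) (hk : k ≤ n) (c : ℝ)
    (h : ∀ T : Finset (Fin n), T.card = k → ∑ i ∈ T, singularValues A i ≤ c) :
    kyFan k A ≤ c := by
  apply csSup_le
  · obtain ⟨T, hT⟩ := (Finset.powersetCard_nonempty (n := k) (s := (Finset.univ : Finset (Fin n)))).mpr (by simpa using hk)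
    exact ⟨∑ i ∈ T, singularValues A i, T, Finset.mem_powersetCard_univ.mp hT, rfl⟩
  · rintro s ⟨T, hT, rfl⟩; exact h T hT

lemma sv_le_opNorm (A : Matrix (Fin m) (Fin n) ℝ) (i : Fin n) :
    singularValues A i ≤ opNorm A :=
  le_csSup ((Set.finite_range _).bddAbove) ⟨i, rfl⟩

lemma exists_opNorm (A : Matrix (Fin m) (Fin n) ℝ) (hn : 0 < n) :
    ∃ i, opNorm A = singularValues A i := by
  have : Nonempty (Fin n) := ⟨⟨0, hn⟩⟩
  have hmem : opNorm A ∈ Set.range (singularValues A) :=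
    (Set.range_nonempty _).csSup_mem (Set.finite_range _)
  obtain ⟨i, hi⟩ := hmem
  exact ⟨i, hi.symm⟩

lemma opNorm_nonneg (A : Matrix (Fin m) (Fin n) ℝ) (hn : 0 < n) : 0 ≤ opNorm A :=
  le_trans (sv_nonneg A ⟨0, hn⟩) (sv_le_opNorm A ⟨0, hn⟩)

lemma opNorm_le (A : Matrix (Fin m) (Fin n) ℝ) (hn : 0 < n) (c : ℝ)
    (h : ∀ i, singularValues A i ≤ c) : opNorm A ≤ c := by
  have : Nonempty (Fin n) := ⟨⟨0, hn⟩⟩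
  exact csSup_le (Set.range_nonempty _) (by rintro s ⟨i, rfl⟩; exact h i)

lemma V_ne_zero (A : Matrix (Fin m) (Fin n) ℝ) (i : Fin n) : Vv A i ≠ 0 := by
  intro h0
  have := V_dot A i i
  rw [h0, zero_dotProduct, if_pos rfl] at this
  norm_num at this

/-- eigenvalue polynomial relation -/
lemma sv_sq_zero_or (A : Matrix (Fin m) (Fin n) ℝ) (c : ℝ)
    (h : (Aᴴ * A) * (Aᴴ * A) = c • (Aᴴ * A)) (i : Fin n) :
    singularValues A i ^ 2 = 0 ∨ singularValues A i ^ 2 = c := by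
  set B := Aᴴ * A with hB
  set lam := singularValues A i ^ 2 with hlam
  have h1 : B *ᵥ Vv A i = lam • Vv A i := ATA_mulVec A i
  have h2 : (B * B) *ᵥ Vv A i = (lam * lam) • Vv A i := by
    rw [← Matrix.mulVec_mulVec, h1, Matrix.mulVec_smul, h1, smul_smul]
  have h3 : (B * B) *ᵥ Vv A i = (c * lam) • Vv A i := by
    rw [h, Matrix.smul_mulVec, h1, smul_smul]
  have h4 : (lam * lam - c * lam) • Vv A i = 0 := by
    rw [sub_smul, ← h2, h3, sub_self]
  rcases smul_eq_zero.mp h4 with h5 | h5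
  · have : lam * (lam - c) = 0 := by ring_nf; ring_nf at h5; linarith
    rcases mul_eq_zero.mp this with h6 | h6
    · exact Or.inl h6
    · exact Or.inr (by linarith [sub_eq_zero.mp h6])
  · exact absurd h5 (V_ne_zero A i)

lemma sum_sv_sq (A : Matrix (Fin m) (Fin n) ℝ) :
    ∑ i, singularValues A i ^ 2 = Matrix.trace (Aᴴ * A) := by
  have h1 : ∀ i, singularValues A i ^ 2 = Vv A i ⬝ᵥ ((Aᴴ * A) *ᵥ Vv A i) := by
    intro i
    rw [ATA_mulVec, dotProduct_smul, V_dot, if_pos rfl, smul_eq_mul, mul_one]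
  calc ∑ i, singularValues A i ^ 2
      = ∑ i, ∑ a, ∑ b, (Aᴴ * A) a b * (Vv A i a * Vv A i b) := by
        refine Finset.sum_congr rfl fun i _ => ?_
        rw [h1 i]
        simp only [dotProduct, Matrix.mulVec, Finset.mul_sum]
        exact Finset.sum_congr rfl fun a _ => Finset.sum_congr rfl fun b _ => by ring
    _ = ∑ a, ∑ b, (Aᴴ * A) a b * ∑ i, Vv A i a * Vv A i b := by
        rw [Finset.sum_comm]
        refine Finset.sum_congr rfl fun a _ => ?_
        rw [Finset.sum_comm]
        refine Finset.sum_congr rfl fun b _ => ?_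
        rw [Finset.mul_sum]
    _ = ∑ a, ∑ b, (Aᴴ * A) a b * (if a = b then 1 else 0) := by
        refine Finset.sum_congr rfl fun a _ => Finset.sum_congr rfl fun b _ => ?_
        rw [V_complete]
    _ = ∑ a, (Aᴴ * A) a a := by
        refine Finset.sum_congr rfl fun a _ => ?_
        simp [mul_ite, Finset.sum_ite_eq]
    _ = Matrix.trace (Aᴴ * A) := by simp [Matrix.trace, Matrix.diag]

-- finner linearity lemmas
lemma finner_smul_right (A : Matrix (Fin m) (Fin n) ℝ) (c : ℝ) (D : Matrix (Fin m) (Fin n) ℝ) :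
    finner A (c • D) = c * finner A D := by
  simp only [finner, Matrix.smul_apply, smul_eq_mul, Finset.mul_sum]
  exact Finset.sum_congr rfl fun a _ => Finset.sum_congr rfl fun b _ => by ring

lemma finner_sum_right {ι : Type*} (A : Matrix (Fin m) (Fin n) ℝ) (s : Finset ι)
    (f : ι → Matrix (Fin m) (Fin n) ℝ) :
    finner A (∑ i ∈ s, f i) = ∑ i ∈ s, finner A (f i) := by
  have happ : ∀ a b, (∑ i ∈ s, f i) a b = ∑ i ∈ s, f i a b := fun a b => by
    simp [Matrix.sum_apply]
  simp only [finner, happ, Finset.mul_sum]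
  calc ∑ a, ∑ b, ∑ i ∈ s, A a b * f i a b
      = ∑ a, ∑ i ∈ s, ∑ b, A a b * f i a b :=
        Finset.sum_congr rfl fun a _ => Finset.sum_comm
    _ = ∑ i ∈ s, ∑ a, ∑ b, A a b * f i a b := Finset.sum_comm

lemma finner_vecMulVec (A : Matrix (Fin m) (Fin n) ℝ) (x : Fin m → ℝ) (y : Fin n → ℝ) :
    finner A (vecMulVec x y) = x ⬝ᵥ (A *ᵥ y) := by
  simp only [finner, vecMulVec_apply, dotProduct, Matrix.mulVec, Finset.mul_sum]
  exact Finset.sum_congr rfl fun a _ => Finset.sum_congr rfl fun b _ => by ring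

lemma finner_decomp (A D : Matrix (Fin m) (Fin n) ℝ) :
    finner A D = ∑ i, singularValues A i * (Uv A i ⬝ᵥ (D *ᵥ Vv A i)) := by
  have hsym : finner A D = finner D A := by
    rw [finner, finner]
    exact Finset.sum_congr rfl fun a _ => Finset.sum_congr rfl fun b _ => by ring
  rw [hsym]
  conv_lhs => rw [decomp A]
  rw [finner_sum_right]
  refine Finset.sum_congr rfl fun i _ => ?_
  rw [finner_smul_right, finner_vecMulVec]

lemma mulVec_decomp (D : Matrix (Fin m) (Fin n) ℝ) (x : Fin n → ℝ) :
    D *ᵥ x = ∑ l, (singularValues D l * (Vv D l ⬝ᵥ x)) • Uv D l := by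
  have hsum : ∀ (g : Fin n → Matrix (Fin m) (Fin n) ℝ),
      (∑ l, g l) *ᵥ x = ∑ l, g l *ᵥ x := by
    intro g
    funext a
    simp only [Matrix.mulVec, dotProduct, Matrix.sum_apply, Finset.sum_apply, Finset.sum_mul]
    rw [Finset.sum_comm]
  conv_lhs => rw [decomp D]
  rw [hsum]
  refine Finset.sum_congr rfl fun l _ => ?_
  rw [Matrix.smul_mulVec]
  have : vecMulVec (Uv D l) (Vv D l) *ᵥ x = (Vv D l ⬝ᵥ x) • Uv D l := by
    funext a
    simp only [vecMulVec_apply, Matrix.mulVec, dotProduct, Pi.smul_apply, smul_eq_mul,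
      Finset.mul_sum]
    rw [Finset.sum_mul]
    exact Finset.sum_congr rfl fun b _ => by ring
  rw [this, smul_smul]

lemma vecMulVec_conjT {p q : ℕ} (x : Fin p → ℝ) (y : Fin q → ℝ) :
    (vecMulVec x y)ᴴ = vecMulVec y x := by
  ext i j
  simp [Matrix.conjTranspose_apply, vecMulVec_apply, mul_comm]

lemma vecMulVec_mul {p q r : ℕ} (a : Fin p → ℝ) (b c : Fin q → ℝ) (d : Fin r → ℝ) :
    vecMulVec a b * vecMulVec c d = (b ⬝ᵥ c) • vecMulVec a d := by
  ext i j
  simp only [Matrix.mul_apply, vecMulVec_apply, Matrix.smul_apply, smul_eq_mul, dotProduct]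
  rw [Finset.sum_mul]
  exact Finset.sum_congr rfl fun x _ => by ring

lemma trace_vecMulVec (v : Fin n → ℝ) : Matrix.trace (vecMulVec v v) = v ⬝ᵥ v := by
  simp [Matrix.trace, Matrix.diag, vecMulVec_apply, dotProduct]

lemma sv_eq_sv_sq_of_idem (D : Matrix (Fin m) (Fin n) ℝ)
    (h : (Dᴴ * D) * (Dᴴ * D) = (1:ℝ) • (Dᴴ * D)) (i : Fin n) :
    singularValues D i = singularValues D i ^ 2 := by
  rw [← Real.sqrt_sq (sv_nonneg D i)]
  rcases sv_sq_zero_or D 1 h i with h1 | h1 <;> rw [h1] <;> simp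

lemma kyFan_vecMulVec_le_one (k : ℕ) (hk : k ≤ n) (u : Fin m → ℝ) (v : Fin n → ℝ)
    (hu : u ⬝ᵥ u = 1) (hv : v ⬝ᵥ v = 1) : kyFan k (vecMulVec u v) ≤ 1 := by
  set D := vecMulVec u v with hD
  have hDD : Dᴴ * D = vecMulVec v v := by
    rw [hD, vecMulVec_conjT, vecMulVec_mul, hu, one_smul]
  have hidem : (Dᴴ * D) * (Dᴴ * D) = (1:ℝ) • (Dᴴ * D) := by
    rw [hDD, vecMulVec_mul, hv, one_smul]
  have hsum : ∑ i, singularValues D i = 1 := by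
    have : ∑ i, singularValues D i = ∑ i, singularValues D i ^ 2 :=
      Finset.sum_congr rfl fun i _ => sv_eq_sv_sq_of_idem D hidem i
    rw [this, sum_sv_sq, hDD, trace_vecMulVec, hv]
  refine kyFan_le D k hk 1 fun T hT => ?_
  calc ∑ i ∈ T, singularValues D i ≤ ∑ i, singularValues D i :=
        Finset.sum_le_sum_of_subset_of_nonneg (Finset.subset_univ T)
          (fun i _ _ => sv_nonneg D i)
    _ = 1 := hsum

section D2
variable (M : Matrix (Fin m) (Fin n) ℝ) (k : ℕ)

noncomputable def suppM : Finset (Fin n) :=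
  Finset.univ.filter fun i => singularValues M i ≠ 0

noncomputable def D2 : Matrix (Fin m) (Fin n) ℝ :=
  ((k : ℝ))⁻¹ • ∑ i ∈ suppM M, vecMulVec (Uv M i) (Vv M i)

lemma sum_outer_mul_sum_outer :
    (∑ i ∈ suppM M, vecMulVec (Vv M i) (Uv M i)) *
      (∑ j ∈ suppM M, vecMulVec (Uv M j) (Vv M j)) =
    ∑ i ∈ suppM M, vecMulVec (Vv M i) (Vv M i) := by
  rw [Matrix.sum_mul]
  refine Finset.sum_congr rfl fun i hi => ?_
  rw [Matrix.mul_sum]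
  have hstep : ∀ j ∈ suppM M,
      vecMulVec (Vv M i) (Uv M i) * vecMulVec (Uv M j) (Vv M j) =
        if i = j then vecMulVec (Vv M i) (Vv M j) else 0 := by
    intro j hj
    rw [vecMulVec_mul, U_dot M i j (Finset.mem_filter.mp hi).2 (Finset.mem_filter.mp hj).2,
      ite_smul, one_smul, zero_smul]
  rw [Finset.sum_congr rfl hstep, Finset.sum_ite_eq (suppM M) i, if_pos hi]

lemma P_idem :
    (∑ i ∈ suppM M, vecMulVec (Vv M i) (Vv M i)) *
      (∑ j ∈ suppM M, vecMulVec (Vv M j) (Vv M j)) =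
    ∑ i ∈ suppM M, vecMulVec (Vv M i) (Vv M i) := by
  rw [Matrix.sum_mul]
  refine Finset.sum_congr rfl fun i hi => ?_
  rw [Matrix.mul_sum]
  have hstep : ∀ j ∈ suppM M,
      vecMulVec (Vv M i) (Vv M i) * vecMulVec (Vv M j) (Vv M j) =
        if i = j then vecMulVec (Vv M i) (Vv M j) else 0 := by
    intro j hj
    rw [vecMulVec_mul, V_dot M i j, ite_smul, one_smul, zero_smul]
  rw [Finset.sum_congr rfl hstep, Finset.sum_ite_eq (suppM M) i, if_pos hi]

lemma D2_conj_mul :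
    (D2 M k)ᴴ * D2 M k =
      ((k:ℝ)⁻¹ * (k:ℝ)⁻¹) • ∑ i ∈ suppM M, vecMulVec (Vv M i) (Vv M i) := by
  have hconj : (D2 M k)ᴴ = (k:ℝ)⁻¹ • ∑ i ∈ suppM M, vecMulVec (Vv M i) (Uv M i) := by
    ext a b
    simp only [Matrix.conjTranspose_apply, D2, Matrix.smul_apply, Matrix.sum_apply,
      vecMulVec_apply, smul_eq_mul, star_trivial]
    congr 1
    exact Finset.sum_congr rfl fun i _ => by ring
  rw [hconj, D2, Matrix.smul_mul, Matrix.mul_smul, sum_outer_mul_sum_outer, smul_smul]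

lemma D2_idem (hk0 : 0 < k) :
    ((D2 M k)ᴴ * D2 M k) * ((D2 M k)ᴴ * D2 M k) =
      ((k:ℝ)⁻¹ * (k:ℝ)⁻¹) • ((D2 M k)ᴴ * D2 M k) := by
  rw [D2_conj_mul, Matrix.smul_mul, Matrix.mul_smul, P_idem]

lemma sv_D2_le (hk0 : 0 < k) (i : Fin n) : singularValues (D2 M k) i ≤ (k:ℝ)⁻¹ := by
  have hkR : (0:ℝ) < (k:ℝ)⁻¹ := by positivity
  rcases sv_sq_zero_or (D2 M k) _ (D2_idem M k hk0) i with h | h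
  · have h0 : singularValues (D2 M k) i = 0 := pow_eq_zero_iff two_ne_zero |>.mp h
    rw [h0]; positivity
  · nlinarith [sv_nonneg (D2 M k) i]

lemma kyFan_D2_le_one (hk0 : 0 < k) (hk : k ≤ n) : kyFan k (D2 M k) ≤ 1 := by
  refine kyFan_le _ k hk 1 fun T hT => ?_
  calc ∑ i ∈ T, singularValues (D2 M k) i ≤ ∑ _i ∈ T, (k:ℝ)⁻¹ :=
        Finset.sum_le_sum fun i _ => sv_D2_le M k hk0 i
    _ = (T.card : ℝ) * (k:ℝ)⁻¹ := by rw [Finset.sum_const, nsmul_eq_mul]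
    _ = 1 := by
        rw [hT]
        field_simp

lemma finner_D2 (hk0 : 0 < k) : finner M (D2 M k) = (1 / (k:ℝ)) * nuclearNorm M := by
  rw [D2, finner_smul_right, finner_sum_right]
  have hterm : ∀ i ∈ suppM M, finner M (vecMulVec (Uv M i) (Vv M i)) = singularValues M i := by
    intro i hi
    rw [finner_vecMulVec, A_mulVec_V, dotProduct_smul, smul_eq_mul,
      U_dot M i i (Finset.mem_filter.mp hi).2 (Finset.mem_filter.mp hi).2, if_pos rfl, mul_one]
  rw [Finset.sum_congr rfl hterm]
  have : ∑ i ∈ suppM M, singularValues M i = nuclearNorm M := by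
    rw [nuclearNorm]
    refine Finset.sum_subset (Finset.filter_subset _ _) fun i _ hi => ?_
    by_contra h
    exact hi (Finset.mem_filter.mpr ⟨Finset.mem_univ i, h⟩)
  rw [this, one_div]

end D2

lemma sv_zero_matrix (i : Fin n) : singularValues (0 : Matrix (Fin m) (Fin n) ℝ) i = 0 := by
  have h : ((0:Matrix (Fin m) (Fin n) ℝ)ᴴ * (0:Matrix (Fin m) (Fin n) ℝ)) *
      ((0:Matrix (Fin m) (Fin n) ℝ)ᴴ * (0:Matrix (Fin m) (Fin n) ℝ)) =
      (0:ℝ) • ((0:Matrix (Fin m) (Fin n) ℝ)ᴴ * (0:Matrix (Fin m) (Fin n) ℝ)) := by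
    simp
  have h1 : singularValues (0 : Matrix (Fin m) (Fin n) ℝ) i ^ 2 = 0 := by
    rcases sv_sq_zero_or 0 0 h i with h1 | h1 <;> exact h1
  exact pow_eq_zero_iff two_ne_zero |>.mp h1

theorem master (M D : Matrix (Fin m) (Fin n) ℝ) (k : ℕ) (hk1 : 1 ≤ k) (hkn : k ≤ n)
    (hD : kyFan k D ≤ 1) :
    finner M D ≤ max ((1 / (k : ℝ)) * nuclearNorm M) (opNorm M) := by
  have hn : 0 < n := lt_of_lt_of_le hk1 hkn
  set C := max ((1 / (k : ℝ)) * nuclearNorm M) (opNorm M) with hC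
  have hopC : opNorm M ≤ C := le_max_right _ _
  have hnucC : (1 / (k : ℝ)) * nuclearNorm M ≤ C := le_max_left _ _
  have hC0 : 0 ≤ C := le_trans (opNorm_nonneg M hn) hopC
  set σM : Fin n → ℝ := singularValues M with hσM
  set σD : Fin n → ℝ := singularValues D with hσD
  set SM : Finset (Fin n) := Finset.univ.filter (fun i => σM i ≠ 0) with hSM
  set SD : Finset (Fin n) := Finset.univ.filter (fun l => σD l ≠ 0) with hSD
  set a : Fin n → Fin n → ℝ := fun i l => Uv M i ⬝ᵥ Uv D l with ha
  set b : Fin n → Fin n → ℝ := fun i l => Vv D l ⬝ᵥ Vv M i with hb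
  -- expansion
  have hUDV : ∀ i, Uv M i ⬝ᵥ (D *ᵥ Vv M i) = ∑ l, σD l * b i l * a i l := by
    intro i
    rw [mulVec_decomp, dotProduct_sum']
    refine Finset.sum_congr rfl fun l _ => ?_
    rw [dotProduct_smul, smul_eq_mul]
  have hexp : finner M D = ∑ l ∈ SD, σD l * ∑ i, σM i * (b i l * a i l) := by
    rw [finner_decomp M D]
    calc ∑ i, singularValues M i * (Uv M i ⬝ᵥ (D *ᵥ Vv M i))
        = ∑ i, ∑ l, σM i * (σD l * b i l * a i l) := by
          refine Finset.sum_congr rfl fun i _ => ?_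
          rw [hUDV i]
          exact Finset.mul_sum _ _ _
      _ = ∑ l, ∑ i, σM i * (σD l * b i l * a i l) := Finset.sum_comm
      _ = ∑ l, σD l * ∑ i, σM i * (b i l * a i l) := by
          refine Finset.sum_congr rfl fun l _ => ?_
          rw [Finset.mul_sum]
          exact Finset.sum_congr rfl fun i _ => by ring
      _ = ∑ l ∈ SD, σD l * ∑ i, σM i * (b i l * a i l) := by
          symm
          refine Finset.sum_subset (Finset.filter_subset _ _) fun l _ hl => ?_
          have : σD l = 0 := by
            by_contra hne
            exact hl (Finset.mem_filter.mpr ⟨Finset.mem_univ l, hne⟩)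
          rw [this, zero_mul]
  set ρ : Fin n → ℝ := fun l => ∑ i, σM i * (|a i l| * |b i l|) with hρ
  have hρ0 : ∀ l, 0 ≤ ρ l := fun l =>
    Finset.sum_nonneg fun i _ => mul_nonneg (sv_nonneg M i)
      (mul_nonneg (abs_nonneg _) (abs_nonneg _))
  have hρSM : ∀ l, ρ l = ∑ i ∈ SM, σM i * (|a i l| * |b i l|) := by
    intro l
    symm
    refine Finset.sum_subset (Finset.filter_subset _ _) fun i _ hi => ?_
    have : σM i = 0 := by
      by_contra hne
      exact hi (Finset.mem_filter.mpr ⟨Finset.mem_univ i, hne⟩)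
    rw [this, zero_mul]
  -- orthonormality facts
  have hUM : ∀ i ∈ SM, ∀ j ∈ SM, Uv M i ⬝ᵥ Uv M j = if i = j then 1 else 0 := by
    intro i hi j hj
    exact U_dot M i j (Finset.mem_filter.mp hi).2 (Finset.mem_filter.mp hj).2
  have hUD : ∀ i ∈ SD, ∀ j ∈ SD, Uv D i ⬝ᵥ Uv D j = if i = j then 1 else 0 := by
    intro i hi j hj
    exact U_dot D i j (Finset.mem_filter.mp hi).2 (Finset.mem_filter.mp hj).2
  have hVM : ∀ i ∈ SM, ∀ j ∈ SM, Vv M i ⬝ᵥ Vv M j = if i = j then 1 else 0 :=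
    fun i _ j _ => V_dot M i j
  have hVD : ∀ i ∈ SD, ∀ j ∈ SD, Vv D i ⬝ᵥ Vv D j = if i = j then 1 else 0 :=
    fun i _ j _ => V_dot D i j
  -- column bound : ρ l ≤ C for l ∈ SD
  have hρC : ∀ l ∈ SD, ρ l ≤ C := by
    intro l hl
    have hBa : ∑ i ∈ SM, (a i l) ^ 2 ≤ 1 := by
      have h1 : ∑ i ∈ SM, (Uv M i ⬝ᵥ Uv D l) ^ 2 ≤ Uv D l ⬝ᵥ Uv D l := bessel SM (Uv M) hUM _
      have h2 : Uv D l ⬝ᵥ Uv D l = 1 := by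
        rw [U_dot D l l (Finset.mem_filter.mp hl).2 (Finset.mem_filter.mp hl).2, if_pos rfl]
      rw [h2] at h1
      exact h1
    have hBb : ∑ i ∈ SM, (b i l) ^ 2 ≤ 1 := by
      have h1 : ∑ i ∈ SM, (Vv M i ⬝ᵥ Vv D l) ^ 2 ≤ Vv D l ⬝ᵥ Vv D l := bessel SM (Vv M) hVM _
      have h2 : Vv D l ⬝ᵥ Vv D l = 1 := by rw [V_dot D l l, if_pos rfl]
      rw [h2] at h1
      calc ∑ i ∈ SM, (b i l) ^ 2 = ∑ i ∈ SM, (Vv M i ⬝ᵥ Vv D l) ^ 2 := by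
            refine Finset.sum_congr rfl fun i _ => ?_
            rw [hb]
            rw [dotProduct_comm]
        _ ≤ 1 := h1
    have hstep : ρ l ≤ opNorm M * ((∑ i ∈ SM, (a i l) ^ 2) + ∑ i ∈ SM, (b i l) ^ 2) / 2 := by
      rw [hρSM l]
      calc ∑ i ∈ SM, σM i * (|a i l| * |b i l|)
          ≤ ∑ i ∈ SM, opNorm M * (((a i l) ^ 2 + (b i l) ^ 2) / 2) := by
            refine Finset.sum_le_sum fun i _ => ?_
            have h1 : |a i l| * |b i l| ≤ ((a i l) ^ 2 + (b i l) ^ 2) / 2 := by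
              nlinarith [sq_nonneg (|a i l| - |b i l|), sq_abs (a i l), sq_abs (b i l)]
            have h2 : σM i ≤ opNorm M := sv_le_opNorm M i
            have h3 : 0 ≤ |a i l| * |b i l| := mul_nonneg (abs_nonneg _) (abs_nonneg _)
            exact mul_le_mul h2 h1 h3 (opNorm_nonneg M hn)
        _ = opNorm M * ((∑ i ∈ SM, (a i l) ^ 2) + ∑ i ∈ SM, (b i l) ^ 2) / 2 := by
            rw [← Finset.sum_add_distrib, Finset.mul_sum, Finset.sum_div]
            exact Finset.sum_congr rfl fun i _ => by ring
    have hop0 : 0 ≤ opNorm M := opNorm_nonneg M hn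
    nlinarith
  -- total bound : ∑ ρ ≤ nuclearNorm M
  have hρsum : ∑ l ∈ SD, ρ l ≤ nuclearNorm M := by
    have hswap : ∑ l ∈ SD, ρ l = ∑ i ∈ SM, σM i * (∑ l ∈ SD, |a i l| * |b i l|) := by
      calc ∑ l ∈ SD, ρ l = ∑ l ∈ SD, ∑ i ∈ SM, σM i * (|a i l| * |b i l|) :=
            Finset.sum_congr rfl fun l _ => hρSM l
        _ = ∑ i ∈ SM, ∑ l ∈ SD, σM i * (|a i l| * |b i l|) := Finset.sum_comm
        _ = ∑ i ∈ SM, σM i * (∑ l ∈ SD, |a i l| * |b i l|) := by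
            refine Finset.sum_congr rfl fun i _ => ?_
            rw [Finset.mul_sum]
    have hinner : ∀ i ∈ SM, ∑ l ∈ SD, |a i l| * |b i l| ≤ 1 := by
      intro i hi
      have hBa : ∑ l ∈ SD, (a i l) ^ 2 ≤ 1 := by
        have h1 : ∑ l ∈ SD, (Uv D l ⬝ᵥ Uv M i) ^ 2 ≤ Uv M i ⬝ᵥ Uv M i := bessel SD (Uv D) hUD _
        have h2 : Uv M i ⬝ᵥ Uv M i = 1 := by
          rw [U_dot M i i (Finset.mem_filter.mp hi).2 (Finset.mem_filter.mp hi).2, if_pos rfl]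
        rw [h2] at h1
        calc ∑ l ∈ SD, (a i l) ^ 2 = ∑ l ∈ SD, (Uv D l ⬝ᵥ Uv M i) ^ 2 := by
              refine Finset.sum_congr rfl fun l _ => ?_
              rw [ha]
              rw [dotProduct_comm]
          _ ≤ 1 := h1
      have hBb : ∑ l ∈ SD, (b i l) ^ 2 ≤ 1 := by
        have h1 : ∑ l ∈ SD, (Vv D l ⬝ᵥ Vv M i) ^ 2 ≤ Vv M i ⬝ᵥ Vv M i := bessel SD (Vv D) hVD _
        have h2 : Vv M i ⬝ᵥ Vv M i = 1 := by rw [V_dot M i i, if_pos rfl]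
        rw [h2] at h1
        exact h1
      calc ∑ l ∈ SD, |a i l| * |b i l|
          ≤ ∑ l ∈ SD, ((a i l) ^ 2 + (b i l) ^ 2) / 2 := by
            refine Finset.sum_le_sum fun l _ => ?_
            nlinarith [sq_nonneg (|a i l| - |b i l|), sq_abs (a i l), sq_abs (b i l)]
        _ = ((∑ l ∈ SD, (a i l) ^ 2) + ∑ l ∈ SD, (b i l) ^ 2) / 2 := by
            rw [← Finset.sum_div, Finset.sum_add_distrib]
        _ ≤ 1 := by linarith
    calc ∑ l ∈ SD, ρ l = ∑ i ∈ SM, σM i * (∑ l ∈ SD, |a i l| * |b i l|) := hswap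
      _ ≤ ∑ i ∈ SM, σM i := by
          refine Finset.sum_le_sum fun i hi => ?_
          calc σM i * (∑ l ∈ SD, |a i l| * |b i l|) ≤ σM i * 1 :=
                mul_le_mul_of_nonneg_left (hinner i hi) (sv_nonneg M i)
            _ = σM i := mul_one _
      _ ≤ nuclearNorm M := by
          rw [nuclearNorm]
          exact Finset.sum_le_sum_of_subset_of_nonneg (Finset.filter_subset _ _)
            (fun i _ _ => sv_nonneg M i)
  -- case split on C
  rcases eq_or_lt_of_le hC0 with hCz | hCpos
  · -- C = 0 : all σM are 0
    have hop0 : opNorm M ≤ 0 := by rw [← hCz] at hopC; exact hopC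
    have hσM0 : ∀ i, σM i = 0 := fun i =>
      le_antisymm (le_trans (sv_le_opNorm M i) hop0) (sv_nonneg M i)
    rw [hexp, ← hCz]
    apply le_of_eq
    refine Finset.sum_eq_zero fun l _ => ?_
    have : ∑ i, σM i * (b i l * a i l) = 0 :=
      Finset.sum_eq_zero fun i _ => by rw [hσM0 i, zero_mul]
    rw [this, mul_zero]
  · -- C > 0
    set w : Fin n → ℝ := fun l => if l ∈ SD then ρ l / C else 0 with hw
    have hw0 : ∀ l, 0 ≤ w l := by
      intro l
      rw [hw]
      dsimp only
      split
      · exact div_nonneg (hρ0 l) hC0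
      · exact le_refl 0
    have hw1 : ∀ l, w l ≤ 1 := by
      intro l
      rw [hw]
      dsimp only
      split
      · next hl => exact (div_le_one hCpos).mpr (hρC l hl)
      · exact zero_le_one
    have hwsum : ∑ l, w l ≤ (k : ℝ) := by
      have hkR : (0:ℝ) < (k : ℝ) := by exact_mod_cast hk1
      have h1 : ∑ l, w l = (∑ l ∈ SD, ρ l) / C := by
        rw [Finset.sum_div, hw, Finset.sum_ite_mem, Finset.univ_inter]
      have hnuck : nuclearNorm M ≤ (k : ℝ) * C := by
        have h2 := mul_le_mul_of_nonneg_left hnucC (le_of_lt hkR)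
        calc nuclearNorm M = (k:ℝ) * ((1/(k:ℝ)) * nuclearNorm M) := by field_simp
          _ ≤ (k:ℝ) * C := h2
      rw [h1, div_le_iff₀ hCpos]
      linarith [hρsum, hnuck]
    obtain ⟨T, hTcard, hTle⟩ := weighted σD w (fun i => sv_nonneg D i) hw0 hw1 k hk1 hkn hwsum
    have hfin1 : finner M D ≤ ∑ l ∈ SD, σD l * ρ l := by
      rw [hexp]
      refine Finset.sum_le_sum fun l _ => ?_
      have hρ'ρ : ∑ i, σM i * (b i l * a i l) ≤ ρ l := by
        refine Finset.sum_le_sum fun i _ => ?_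
        refine mul_le_mul_of_nonneg_left ?_ (sv_nonneg M i)
        calc b i l * a i l ≤ |b i l * a i l| := le_abs_self _
          _ = |a i l| * |b i l| := by rw [abs_mul, mul_comm]
      exact mul_le_mul_of_nonneg_left hρ'ρ (sv_nonneg D l)
    have hfin2 : ∑ l ∈ SD, σD l * ρ l = C * ∑ l, w l * σD l := by
      have h1 : ∑ l, w l * σD l = ∑ l ∈ SD, (ρ l / C) * σD l := by
        have h2 : ∀ l, w l * σD l = if l ∈ SD then (ρ l / C) * σD l else 0 := by
          intro l
          rw [hw]
          dsimp only
          split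
          · rfl
          · rw [zero_mul]
        rw [Finset.sum_congr rfl fun l _ => h2 l, Finset.sum_ite_mem, Finset.univ_inter]
      rw [h1, Finset.mul_sum]
      refine Finset.sum_congr rfl fun l _ => ?_
      field_simp
    have hfin3 : ∑ l, w l * σD l ≤ 1 :=
      le_trans hTle (le_trans (sum_le_kyFan D k T hTcard) hD)
    calc finner M D ≤ ∑ l ∈ SD, σD l * ρ l := hfin1
      _ = C * ∑ l, w l * σD l := hfin2
      _ ≤ C * 1 := mul_le_mul_of_nonneg_left hfin3 hC0
      _ = C := mul_one C

theorem main_result {m n : ℕ} (M : Matrix (Fin m) (Fin n) ℝ) (k : ℕ)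
    (hk1 : 1 ≤ k) (hk : k ≤ min m n) :
    dualMatNorm (kyFan k) M = max ((1 / (k : ℝ)) * nuclearNorm M) (opNorm M) := by
  have hkn : k ≤ n := le_trans hk (min_le_right m n)
  have hn : 0 < n := lt_of_lt_of_le hk1 hkn
  have hk0 : 0 < k := hk1
  set C := max ((1 / (k : ℝ)) * nuclearNorm M) (opNorm M) with hC
  set Sset := {r : ℝ | ∃ D, kyFan k D ≤ 1 ∧ r = finner M D} with hSset
  have hdual : dualMatNorm (kyFan k) M = sSup Sset := rfl
  have hkyFan0 : kyFan k (0 : Matrix (Fin m) (Fin n) ℝ) ≤ 1 := by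
    refine kyFan_le 0 k hkn 1 fun T hT => ?_
    have : ∑ i ∈ T, singularValues (0 : Matrix (Fin m) (Fin n) ℝ) i = 0 :=
      Finset.sum_eq_zero fun i _ => sv_zero_matrix i
    rw [this]
    norm_num
  have hfinner0 : finner M (0 : Matrix (Fin m) (Fin n) ℝ) = 0 := by
    simp [finner]
  have h0mem : (0 : ℝ) ∈ Sset := ⟨0, hkyFan0, hfinner0.symm⟩
  have hub : ∀ r ∈ Sset, r ≤ C := by
    rintro r ⟨D, hD, rfl⟩
    exact master M D k hk1 hkn hD
  have hbdd : BddAbove Sset := ⟨C, hub⟩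
  rw [hdual]
  apply le_antisymm
  · exact csSup_le ⟨0, h0mem⟩ hub
  · rw [hC]
    apply max_le
    · apply le_csSup hbdd
      exact ⟨D2 M k, kyFan_D2_le_one M k hk0 hkn, (finner_D2 M k hk0).symm⟩
    · obtain ⟨i0, hi0⟩ := exists_opNorm M hn
      by_cases hz : singularValues M i0 = 0
      · rw [hi0, hz]
        exact le_csSup hbdd h0mem
      · have hu : Uv M i0 ⬝ᵥ Uv M i0 = 1 := by
          rw [U_dot M i0 i0 hz hz, if_pos rfl]
        have hv : Vv M i0 ⬝ᵥ Vv M i0 = 1 := by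
          rw [V_dot M i0 i0, if_pos rfl]
        have hfin : finner M (vecMulVec (Uv M i0) (Vv M i0)) = singularValues M i0 := by
          rw [finner_vecMulVec, A_mulVec_V, dotProduct_smul, smul_eq_mul, hu, mul_one]
        rw [hi0]
        apply le_csSup hbdd
        exact ⟨vecMulVec (Uv M i0) (Vv M i0),
          kyFan_vecMulVec_le_one k hkn _ _ hu hv, hfin.symm⟩

end KFdual

/-- The dual of the Ky Fan k-norm is max{(1/k)·nuclear norm, operator norm}. -/
theorem stmt6 {m n : ℕ} (M : Matrix (Fin m) (Fin n) ℝ) (k : ℕ)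
    (hk1 : 1 ≤ k) (hk : k ≤ min m n) :
    dualMatNorm (kyFan k) M = max ((1 / (k : ℝ)) * nuclearNorm M) (opNorm M) :=
  KFdual.main_result M k hk1 hk
end
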